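/- Suppose H and F are r-uniform hypergraphs. Then there is a homomorphism H → F if and only if there exists a function g : i(F) → i(H) such that the family {A_x : x ∈ V(F)}, where A_x = ⋂_{I ∈ i(F), x ∈ I} g(I), covers V(H). -/

import Mathlib

open Set

universe u

variable {V : Type u}

/-- A set of vertices is independent if no two of its members are adjacent. -/
def IndepSet (G : SimpleGraph V) (I : Set V) : Prop :=
  I.Pairwise (fun u v => ¬ G.Adj u v)

/-- A maximal independent set of a graph. -/
def MaxIndep (G : SimpleGraph V) (I : Set V) : Prop :=
  IndepSet G I ∧ ∀ J : Set V, IndepSet G J → I ⊆ J → J = I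

/-- An induced matching with `k` edges `a i b i`: the `2k` endpoints are pairwise
distinct and the only edges of `G` between them are the matching edges themselves. -/
def IsInducedMatching (G : SimpleGraph V) (k : ℕ) (a b : Fin k → V) : Prop :=
  (∀ i, G.Adj (a i) (b i)) ∧
  ∀ i j, i ≠ j → ∀ x ∈ ({a i, b i} : Set V), ∀ y ∈ ({a j, b j} : Set V),
    x ≠ y ∧ ¬ G.Adj x y

/-- `μ_G(S)`: maximum size of an induced matching each of whose edges meets `S`. -/
noncomputable def muS (G : SimpleGraph V) (S : Set V) : ℕ :=
  sSup {k | ∃ a b : Fin k → V, IsInducedMatching G k a b ∧ ∀ i, a i ∈ S ∨ b i ∈ S}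

/-- `α_G(S)`: maximum size of an independent set contained in `S`. -/
noncomputable def alphaS (G : SimpleGraph V) (S : Set V) : ℕ :=
  sSup {n | ∃ I : Set V, I ⊆ S ∧ IndepSet G I ∧ I.ncard = n}

/-- The trace (restriction) of a set family on `S`. -/
def trace (S : Set V) (F : Set (Set V)) : Set (Set V) :=
  (fun I => I ∩ S) '' F

/-- A hypergraph (given by its edge set) is a clutter if no edge properly contains another. -/
def IsClutter (E : Set (Set V)) : Prop := ∀ h ∈ E, ∀ f ∈ E, f ⊆ h → f = h

/-- A transversal of a hypergraph: a set meeting every edge. -/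
def IsTransversal (E : Set (Set V)) (T : Set V) : Prop := ∀ h ∈ E, (T ∩ h).Nonempty

/-- The blocker: the clutter of all inclusion-wise minimal transversals. -/
def blocker (E : Set (Set V)) : Set (Set V) :=
  {T | IsTransversal E T ∧ ∀ T' ⊆ T, IsTransversal E T' → T' = T}

/-- Inclusion-wise minimal members of a family of sets. -/
def minEdges (F : Set (Set V)) : Set (Set V) := {h ∈ F | ∀ f ∈ F, f ⊆ h → f = h}

/-- Deletion of a vertex from a clutter. -/
def del (E : Set (Set V)) (v : V) : Set (Set V) := {h ∈ E | v ∉ h}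

/-- Contraction of a vertex in a clutter. -/
def contr (E : Set (Set V)) (v : V) : Set (Set V) :=
  minEdges ((fun h => h \ {v}) '' E)

/-- Contraction of a set of vertices in a clutter. -/
def contrSet (E : Set (Set V)) (B : Set V) : Set (Set V) :=
  minEdges ((fun h => h \ B) '' E)

/-- Join of two clutters: minimal elements of the union of the edge sets. -/
def cJoin (E F : Set (Set V)) : Set (Set V) := minEdges (E ∪ F)

/-- Meet of two clutters: minimal elements of pairwise unions of edges. -/
def cMeet (E F : Set (Set V)) : Set (Set V) :=
  minEdges {s | ∃ h ∈ E, ∃ f ∈ F, s = h ∪ f}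

/-- `H ∘ (h, u, v) = H[u; h∖{u}] ∨ H[v; h∖{v}]`. -/
def cOp (E : Set (Set V)) (h : Set V) (u v : V) : Set (Set V) :=
  cJoin (contrSet (del E u) (h \ {u})) (contrSet (del E v) (h \ {v}))

/-- An independent (stable) set of a hypergraph: contains no edge. -/
def HIndep (E : Set (Set V)) (I : Set V) : Prop := ∀ h ∈ E, ¬ h ⊆ I

/-- A maximal independent set of a hypergraph. -/
def MaxHIndep (E : Set (Set V)) (I : Set V) : Prop :=
  HIndep E I ∧ ∀ J : Set V, HIndep E J → I ⊆ J → J = I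

/-- The Gaifman graph of a hypergraph. -/
def gaif (E : Set (Set V)) : SimpleGraph V :=
  SimpleGraph.fromRel (fun u v => ∃ h ∈ E, u ∈ h ∧ v ∈ h)

/-- A well-behaved hypergraph width measure. -/
structure WellBehaved (lam : Set (Set V) → Set V → ℚ) : Prop where
  one : ∀ (E : Set (Set V)) (x : V), 1 ≤ lam E {x}
  subadd : ∀ (E : Set (Set V)) (S T : Set V), lam E (S ∪ T) ≤ lam E S + lam E T
  add : ∀ (E : Set (Set V)) (S T : Set V), Disjoint S T →
    (∀ s ∈ S, ∀ t ∈ T, ¬ (gaif E).Adj s t) → lam E (S ∪ T) = lam E S + lam E T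
  mono : ∀ (E F : Set (Set V)) (S T : Set V), E ⊆ F → S ⊆ T → lam F S ≤ lam E T

/-- `(T, bag)` is a tree decomposition of `G`. -/
structure IsTreeDecomp {ι : Type} (G : SimpleGraph V) (T : SimpleGraph ι)
    (bag : ι → Set V) : Prop where
  conn : T.Connected
  acyclic : T.IsAcyclic
  edge_cover : ∀ ⦃u v : V⦄, G.Adj u v → ∃ t, u ∈ bag t ∧ v ∈ bag t
  vert_conn : ∀ v : V, (T.induce {t | v ∈ bag t}).Connected

/-- The `λ`-treewidth of `G` for a width measure `lam` on bags. -/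
noncomputable def lamTW (G : SimpleGraph V) (lam : Set V → ℕ) : ℕ :=
  sInf {k | ∃ (ι : Type) (T : SimpleGraph ι) (bag : ι → Set V),
    IsTreeDecomp G T bag ∧ ∀ t, lam (bag t) ≤ k}

/-- `M(G)`: attach a pendant vertex to every vertex of `G`. -/
def pend (G : SimpleGraph V) : SimpleGraph (V ⊕ V) :=
  SimpleGraph.fromRel (fun x y =>
    match x, y with
    | Sum.inl u, Sum.inl v => G.Adj u v
    | Sum.inl u, Sum.inr v => u = v
    | _, _ => False)

/-- `L²(G)`: vertices are the edges of `G`; two distinct edges are adjacent iff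
their union induces a connected subgraph. -/
def L2 (G : SimpleGraph V) : SimpleGraph G.edgeSet :=
  SimpleGraph.fromRel (fun e f =>
    ∃ x ∈ (e : Sym2 V), ∃ y ∈ (f : Sym2 V), x = y ∨ G.Adj x y)

/-- The Gaifman graph with a set `S` of vertices removed (vertices of `S` become isolated). -/
def gaifMinus (E : Set (Set V)) (S : Set V) : SimpleGraph V :=
  SimpleGraph.fromRel (fun u v => (gaif E).Adj u v ∧ u ∉ S ∧ v ∉ S)

/-- `S` is an `(A, B)`-separator: `A ∩ B ⊆ S` and every walk from `A` to `B` meets `S`. -/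
def IsSeparator (G : SimpleGraph V) (A B S : Set V) : Prop :=
  A ∩ B ⊆ S ∧ ∀ a ∈ A, ∀ b ∈ B, ∀ p : G.Walk a b, ∃ x ∈ p.support, x ∈ S

/-- Minors of clutters: obtained by repeated deletions and contractions. -/
inductive IsMinor : Set (Set V) → Set (Set V) → Prop
  | refl (E : Set (Set V)) : IsMinor E E
  | delStep {F E : Set (Set V)} (v : V) : IsMinor F E → IsMinor (del F v) E
  | contrStep {F E : Set (Set V)} (v : V) : IsMinor F E → IsMinor (contr F v) E


lemma maxext {V : Type u} [Finite V] (E : Set (Set V)) {I : Set V} (hI : HIndep E I) :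
    ∃ J, MaxHIndep E J ∧ I ⊆ J := by
  obtain ⟨J, hJ, hmax⟩ := Set.Finite.exists_maximalFor id {J | HIndep E J ∧ I ⊆ J}
    (Set.toFinite _) ⟨I, hI, subset_rfl⟩
  exact ⟨J, ⟨hJ.1, fun K hK hJK => Set.Subset.antisymm (hmax ⟨hK, hJ.2.trans hJK⟩ hJK) hJK⟩, hJ.2⟩

/-- existence of a homomorphism between `r`-uniform hypergraphs is
equivalent to the existence of a covering assignment of maximal independent sets. -/
theorem stmt_9 {V W : Type} [Fintype V] [Fintype W] (r : ℕ)
    (EH : Set (Set V)) (EF : Set (Set W))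
    (hH : ∀ h ∈ EH, h.ncard = r) (hF : ∀ h ∈ EF, h.ncard = r) :
    (∃ f : V → W, ∀ h ∈ EH, f '' h ∈ EF) ↔
    (∃ g : Set W → Set V, (∀ I : Set W, MaxHIndep EF I → MaxHIndep EH (g I)) ∧
      (⋃ x : W, ⋂ I ∈ {I : Set W | MaxHIndep EF I ∧ x ∈ I}, g I) = Set.univ) := by
  classical
  constructor
  · rintro ⟨f, hf⟩
    choose g hg hsub using fun (I : Set W) (hI : MaxHIndep EF I) =>
      maxext EH (I := f ⁻¹' I) (fun h hh hsubI => hI.1 (f '' h) (hf h hh) (by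
        rintro _ ⟨v, hv, rfl⟩; exact hsubI hv))
    refine ⟨fun I => if hI : MaxHIndep EF I then g I hI else ∅, ?_, ?_⟩
    · intro I hI; simp only [dif_pos hI]; exact hg I hI
    · ext v
      simp only [Set.mem_iUnion, Set.mem_iInter, Set.mem_univ, iff_true, Set.mem_setOf_eq]
      refine ⟨f v, fun I hI => ?_⟩
      simp only [dif_pos hI.1]
      exact hsub I hI.1 hI.2
  · rintro ⟨g, hg, hcov⟩
    have hch : ∀ v : V, ∃ w : W, ∀ I, MaxHIndep EF I → w ∈ I → v ∈ g I := by
      intro v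
      have hv : v ∈ (⋃ x : W, ⋂ I ∈ {I : Set W | MaxHIndep EF I ∧ x ∈ I}, g I) :=
        hcov ▸ Set.mem_univ v
      simp only [Set.mem_iUnion, Set.mem_iInter, Set.mem_setOf_eq] at hv
      obtain ⟨w, hw⟩ := hv
      exact ⟨w, fun I h1 h2 => hw I ⟨h1, h2⟩⟩
    choose f hfv using hch
    refine ⟨f, fun h hh => ?_⟩
    by_contra hnot
    by_cases hind : HIndep EF (f '' h)
    · obtain ⟨J, hJ, hsub⟩ := maxext EF hind
      have hhJ : h ⊆ g J := fun v hv => hfv v J hJ (hsub ⟨v, hv, rfl⟩)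
      exact (hg J hJ).1 h hh hhJ
    · unfold HIndep at hind
      push_neg at hind
      obtain ⟨e, he, hesub⟩ := hind
      have heq : e = f '' h := Set.eq_of_subset_of_ncard_le hesub (by
        rw [hF e he]
        calc (f '' h).ncard ≤ h.ncard := Set.ncard_image_le (Set.toFinite h)
        _ = r := hH h hh) (Set.toFinite _)
      exact hnot (heq ▸ he)
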